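/- arXiv:2504.14006 — 4 statements merged into one kernel-verified Lean document; each statement's English description precedes it below -/
import Mathlib

section
/- In the measure setting, let K be an intermediate field with E ⊆ K ⊆ L and K ∩ k_L = k, and let σ̄′ and σ̄″ be two lifts of ρ̄ to Gal(L/K). Then for every subset X ⊆ 𝒮(L/K), |{τ̄ ∈ Gal(L/K·k_L)^n : Fix(σ′_1τ_1,…,σ′_nτ_n) ∈ X}| = |{τ̄ ∈ Gal(L/K·k_L)^n : Fix(σ″_1τ_1,…,σ″_nτ_n) ∈ X}|. Consequently the measure μ¹_{L/K} does not depend on the choice of lift of ρ̄. -/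
open IntermediateField

section MeasureSetting

variable (k E L : Type) [Field k] [Field E] [Field L]
  [Algebra k E] [Algebra E L] [Algebra k L] [IsScalarTower k E L]

/-- `E` is regular over `k`: every element of `E` algebraic over `k` lies in `k`. -/
def IsRegularExtension (k E : Type*) [Field k] [Field E] [Algebra k E] : Prop :=
  ∀ x : E, IsAlgebraic k x → x ∈ (algebraMap k E).range

/-- `𝒮(L/K)`: the set of intermediate fields `F` with `K ⊆ F ⊆ L` and `F ∩ k_L = k`,
where `k_L` is the relative separable closure of `k` in `L`. -/
def SS (K : IntermediateField E L) : Set (IntermediateField E L) :=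
  {F | K ≤ F ∧ F.restrictScalars k ⊓ separableClosure k L = ⊥}

variable (n : ℕ)

/-- The automorphism `σ ∈ Gal(L/K)` restricts to `ρ ∈ Gal(k_L/k)` on `k_L`. -/
def RestrictsTo (K : IntermediateField E L) (σ : L ≃ₐ[K] L)
    (ρ : ↥(separableClosure k L) ≃ₐ[k] ↥(separableClosure k L)) : Prop :=
  ∀ x : ↥(separableClosure k L), σ (x : L) = ((ρ x : L))

/-- `σ̄` is a lift of `ρ̄` to `Gal(L/K)`. -/
def IsLift (K : IntermediateField E L)
    (ρ : Fin n → (↥(separableClosure k L) ≃ₐ[k] ↥(separableClosure k L)))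
    (σ : Fin n → (L ≃ₐ[K] L)) : Prop :=
  ∀ i, RestrictsTo k E L K (σ i) (ρ i)

/-- The fixed field in `L` of the subgroup generated by `σ₁, …, σₙ ∈ Gal(L/K)`,
viewed as an intermediate field of `L/E`. -/
def FixT (K : IntermediateField E L) (σ : Fin n → (L ≃ₐ[K] L)) : IntermediateField E L :=
  (IntermediateField.fixedField (Subgroup.closure (Set.range σ))).restrictScalars E

/-- The compositum `K·k_L`, as an intermediate field of `L/K`. -/
def compKL (K : IntermediateField E L) : IntermediateField K L :=
  IntermediateField.adjoin K ((separableClosure k L : IntermediateField k L) : Set L)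

/-- `μ¹_{L/K}(X)` computed from a chosen lift `σ'` of `ρ̄`:
`|{τ̄ ∈ Gal(L/K·k_L)ⁿ : Fix(σ'₁τ₁,…,σ'ₙτₙ) ∈ X}| / [L : K·k_L]ⁿ`, where
`Gal(L/K·k_L)` is the subgroup of `Gal(L/K)` fixing `k_L` (equivalently `K·k_L`)
pointwise. -/
noncomputable def mu1Lift (K : IntermediateField E L) (σ' : Fin n → (L ≃ₐ[K] L))
    (X : Set (IntermediateField E L)) : ℚ :=
  (Nat.card {τ : Fin n → ↥((compKL k E L K).fixingSubgroup) //
      FixT E L n K (fun i => σ' i * ((τ i : L ≃ₐ[K] L))) ∈ X} : ℚ) /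
    ((Module.finrank ↥(compKL k E L K) L : ℚ)) ^ n

/-- `μ¹_{L/K}(X)`, in lift-free form: the set of tuples `σ̄'τ̄` with `σ̄'` a fixed lift of
`ρ̄` and `τ̄ ∈ Gal(L/K·k_L)ⁿ` is exactly the set of tuples `ᾱ ∈ Gal(L/K)ⁿ` lifting `ρ̄`,
so `μ¹_{L/K}(X) = |{ᾱ ∈ Gal(L/K)ⁿ : ᾱ lifts ρ̄ and Fix(ᾱ) ∈ X}| / [L : K·k_L]ⁿ`. -/
noncomputable def mu1 (ρ : Fin n → (↥(separableClosure k L) ≃ₐ[k] ↥(separableClosure k L)))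
    (K : IntermediateField E L) (X : Set (IntermediateField E L)) : ℚ :=
  (Nat.card {α : Fin n → (L ≃ₐ[K] L) //
      IsLift k E L n K ρ α ∧ FixT E L n K α ∈ X} : ℚ) /
    ((Module.finrank ↥(compKL k E L K) L : ℚ)) ^ n

/-- The iterated measures `μⁱ_{L/K}` on singletons: `μ⁰_{L/K}` is the point mass at `K`,
and `μ^{i+1}_{L/K}({F}) = Σ_{F' ∈ 𝒮(L/K)} μⁱ_{L/K}({F'})·μ¹_{L/F'}({F})`. -/
noncomputable def muI (ρ : Fin n → (↥(separableClosure k L) ≃ₐ[k] ↥(separableClosure k L)))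
    (K : IntermediateField E L) : ℕ → IntermediateField E L → ℚ
  | 0, F => ({K} : Set (IntermediateField E L)).indicator 1 F
  | (i+1), F => ∑ᶠ F' ∈ SS k E L K, muI ρ K i F' * mu1 k E L n ρ F' {F}

end MeasureSetting

theorem restricts_agree
    (k E L : Type) [Field k] [Field E] [Field L]
    [Algebra k E] [Algebra E L] [Algebra k L] [IsScalarTower k E L]
    (K : IntermediateField E L) (f g : L ≃ₐ[K] L)
    (ρ0 : ↥(separableClosure k L) ≃ₐ[k] ↥(separableClosure k L))
    (hf : RestrictsTo k E L K f ρ0) (hg : RestrictsTo k E L K g ρ0) :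
    g⁻¹ * f ∈ (compKL k E L K).fixingSubgroup := by
  rw [IntermediateField.mem_fixingSubgroup_iff]
  intro x hx
  have hfg : f x = g x := by
    induction hx using IntermediateField.adjoin_induction with
    | mem y hy =>
        obtain ⟨z, rfl⟩ : ∃ z : ↥(separableClosure k L), (z : L) = y := ⟨⟨y, hy⟩, rfl⟩
        rw [hf z, hg z]
    | algebraMap y => rw [AlgEquiv.commutes, AlgEquiv.commutes]
    | add y z _ _ hy hz => rw [map_add, map_add, hy, hz]
    | inv y _ hy => rw [map_inv₀, map_inv₀, hy]
    | mul y z _ _ hy hz => rw [map_mul, map_mul, hy, hz]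
  show g⁻¹ (f x) = x
  rw [hfg]
  exact g.symm_apply_apply x

/-- the measure `μ¹_{L/K}` does not depend on the choice of the lift of `ρ̄`
to `Gal(L/K)`: for two lifts `σ̄'`, `σ̄''` and any `X ⊆ 𝒮(L/K)`, the corresponding counts
of tuples `τ̄ ∈ Gal(L/K·k_L)ⁿ` agree, and hence the measures agree. -/
theorem statement4
    (k E L : Type) [Field k] [Field E] [Field L] [PerfectField k]
    [Algebra k E] [Algebra E L] [Algebra k L] [IsScalarTower k E L]
    (hreg : IsRegularExtension k E)
    [FiniteDimensional E L] [IsGalois E L]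
    [IsGalois k (separableClosure k L)]
    (n : ℕ) (hn : 1 ≤ n)
    (ρ : Fin n → (↥(separableClosure k L) ≃ₐ[k] ↥(separableClosure k L)))
    (hgen : Subgroup.closure (Set.range ρ) = ⊤)
    (K : IntermediateField E L)
    (hK : K.restrictScalars k ⊓ separableClosure k L = ⊥)
    (σ' σ'' : Fin n → (L ≃ₐ[K] L))
    (hσ' : IsLift k E L n K ρ σ') (hσ'' : IsLift k E L n K ρ σ'')
    (X : Set (IntermediateField E L)) (hX : X ⊆ SS k E L K) :
    Nat.card {τ : Fin n → ↥((compKL k E L K).fixingSubgroup) //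
        FixT E L n K (fun i => σ' i * ((τ i : L ≃ₐ[K] L))) ∈ X} =
      Nat.card {τ : Fin n → ↥((compKL k E L K).fixingSubgroup) //
        FixT E L n K (fun i => σ'' i * ((τ i : L ≃ₐ[K] L))) ∈ X} ∧
    mu1Lift k E L n K σ' X = mu1Lift k E L n K σ'' X := by
  set H := (compKL k E L K).fixingSubgroup
  have hδ : ∀ i, (σ'' i)⁻¹ * σ' i ∈ H :=
    fun i => restricts_agree k E L K (σ' i) (σ'' i) (ρ i) (hσ' i) (hσ'' i)
  have hδ' : ∀ i, (σ' i)⁻¹ * σ'' i ∈ H := by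
    intro i
    have := H.inv_mem (hδ i)
    simpa [mul_inv_rev] using this
  have key : ∀ (τ : Fin n → ↥H),
      FixT E L n K (fun i => σ' i * ((τ i : L ≃ₐ[K] L))) =
      FixT E L n K (fun i => σ'' i * (((⟨(σ'' i)⁻¹ * σ' i, hδ i⟩ : ↥H) * τ i : ↥H) : L ≃ₐ[K] L)) := by
    intro τ
    congr 1
    funext i
    show σ' i * (τ i : L ≃ₐ[K] L) = σ'' i * ((σ'' i)⁻¹ * σ' i * (τ i : L ≃ₐ[K] L))
    group
  have e : {τ : Fin n → ↥H // FixT E L n K (fun i => σ' i * ((τ i : L ≃ₐ[K] L))) ∈ X} ≃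
      {τ : Fin n → ↥H // FixT E L n K (fun i => σ'' i * ((τ i : L ≃ₐ[K] L))) ∈ X} :=
    { toFun := fun τ => ⟨fun i => (⟨(σ'' i)⁻¹ * σ' i, hδ i⟩ : ↥H) * τ.1 i, by
        have := τ.2
        rwa [key τ.1] at this⟩
      invFun := fun τ => ⟨fun i => (⟨(σ' i)⁻¹ * σ'' i, hδ' i⟩ : ↥H) * τ.1 i, by
        have := τ.2
        rw [key (fun i => (⟨(σ' i)⁻¹ * σ'' i, hδ' i⟩ : ↥H) * τ.1 i)]
        convert this using 3 with i
        ext x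
        show (σ'' i * ((σ'' i)⁻¹ * σ' i * ((σ' i)⁻¹ * σ'' i * (τ.1 i : L ≃ₐ[K] L)))) x =
          (σ'' i * (τ.1 i : L ≃ₐ[K] L)) x
        congr 1
        group⟩
      left_inv := fun τ => by
        apply Subtype.ext
        funext i
        apply Subtype.ext
        show (σ' i)⁻¹ * σ'' i * ((σ'' i)⁻¹ * σ' i * (τ.1 i : L ≃ₐ[K] L)) =
          (τ.1 i : L ≃ₐ[K] L)
        group
      right_inv := fun τ => by
        apply Subtype.ext
        funext i
        apply Subtype.ext
        show (σ'' i)⁻¹ * σ' i * ((σ' i)⁻¹ * σ'' i * (τ.1 i : L ≃ₐ[K] L)) =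
          (τ.1 i : L ≃ₐ[K] L)
        group }
  have hcard := Nat.card_congr e
  exact ⟨hcard, by unfold mu1Lift; rw [hcard]⟩
end

section
/- In the measure setting, let K be an intermediate field with E ⊆ K ⊆ L and K ∩ k_L = k, and let σ̄′ be a lift of ρ̄ to Gal(L/K). Suppose k₁ ⊆ L is a finite Galois extension of k such that for every intermediate field F with K ⊆ F ⊆ L one has F ∩ k_L = k if and only if F ∩ k₁ = k (so 𝒮(L/K) = {F : K ⊆ F ⊆ L, F ∩ k₁ = k}). Then μ¹_{L/K} computed with respect to k₁ or to k_L gives the same result: for every F ∈ 𝒮(L/K), |{τ̄ ∈ Gal(L/K·k_L)^n : Fix(σ′_1τ_1,…,σ′_nτ_n) = F}| / [L : K·k_L]^n = |{τ̄ ∈ Gal(L/K·k₁)^n : Fix(σ′_1τ_1,…,σ′_nτ_n) = F}| / [L : K·k₁]^n. -/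
open IntermediateField

namespace St6Aux

open Finset Pointwise

variable {G : Type*} [Group G] [Finite G] {n : ℕ}

private lemma card_coset_inter (σ : G) (P H N : Subgroup G) [N.Normal]
    [Fintype G] [DecidableEq G] [DecidablePred (· ∈ P)] [DecidablePred (· ∈ H)]
    (hNP : N ≤ P) (hσ : σ ∈ H ⊔ N) :
    (univ.filter fun x : G => σ⁻¹ * x ∈ P ∧ x ∈ H).card = Nat.card ↥(P ⊓ H) := by
  classical
  have hσ' : σ ∈ (H : Set G) * (N : Set G) := by rw [← Subgroup.mul_normal H N]; exact_mod_cast hσ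
  obtain ⟨h₀, hh₀, ν₀, hν₀, rfl⟩ := hσ'
  have hcard : Nat.card ↥(P ⊓ H) = (univ.filter fun y : G => y ∈ P ⊓ H).card := by
    rw [Nat.card_eq_fintype_card, Fintype.card_subtype]
  rw [hcard]
  apply Finset.card_bij' (fun x _ => h₀⁻¹ * x) (fun y _ => h₀ * y)
  · intro x hx
    simp only [mem_filter, mem_univ, true_and] at hx ⊢
    obtain ⟨hx1, hx2⟩ := hx
    have heq : (h₀ * ν₀)⁻¹ * x = ν₀⁻¹ * (h₀⁻¹ * x) := by group
    rw [heq] at hx1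
    have hxP : h₀⁻¹ * x ∈ P :=
      (Subgroup.mul_mem_cancel_left P (P.inv_mem (hNP hν₀))).mp hx1
    exact Subgroup.mem_inf.mpr ⟨hxP, (Subgroup.mul_mem_cancel_left H (H.inv_mem hh₀)).mpr hx2⟩
  · intro y hy
    simp only [mem_filter, mem_univ, true_and, Subgroup.mem_inf] at hy ⊢
    obtain ⟨hy1, hy2⟩ := hy
    constructor
    · have heq : (h₀ * ν₀)⁻¹ * (h₀ * y) = ν₀⁻¹ * y := by group
      rw [heq]
      exact P.mul_mem (P.inv_mem (hNP hν₀)) hy1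
    · exact H.mul_mem hh₀ hy2
  · intro x _; group
  · intro y _; group

private lemma card_inf_mul (H N N₁ : Subgroup G) [N.Normal]
    (hle : N ≤ N₁) (htop : H ⊔ N = ⊤) :
    Nat.card ↥(N₁ ⊓ H) * Nat.card ↥N = Nat.card ↥(N ⊓ H) * Nat.card ↥N₁ := by
  set A := N₁ ⊓ H with hA
  have hAN : A ⊔ N = N₁ := by
    apply le_antisymm (sup_le inf_le_left hle)
    intro x hx
    have hx' : x ∈ (H : Set G) * (N : Set G) := by
      rw [← Subgroup.mul_normal H N]
      exact htop ▸ Subgroup.mem_top x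
    obtain ⟨h, hh, ν, hν, rfl⟩ := hx'
    have hhN₁ : h ∈ N₁ := by
      have heq : h = h * ν * ν⁻¹ := by group
      rw [heq]
      exact N₁.mul_mem hx (N₁.inv_mem (hle hν))
    exact Subgroup.mul_mem _ (Subgroup.mem_sup_left (Subgroup.mem_inf.mpr ⟨hhN₁, hh⟩))
      (Subgroup.mem_sup_right hν)
  have c1 := Subgroup.card_eq_card_quotient_mul_card_subgroup (N.subgroupOf A)
  have c2 := Subgroup.card_eq_card_quotient_mul_card_subgroup (N.subgroupOf (A ⊔ N))
  have hq := Nat.card_congr (QuotientGroup.quotientInfEquivProdNormalQuotient A N).toEquiv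
  have hNsub : Nat.card ↥(N.subgroupOf (A ⊔ N)) = Nat.card ↥N :=
    Nat.card_congr (Subgroup.subgroupOfEquivOfLe le_sup_right).toEquiv
  have hNH_le_A : N ⊓ H ≤ A := inf_le_inf_right H hle
  have hNA : Nat.card ↥(N.subgroupOf A) = Nat.card ↥(N ⊓ H) := by
    have h2 : N ⊓ A = N ⊓ H := by rw [hA, ← inf_assoc, inf_eq_left.mpr hle]
    have h1 : N.subgroupOf A = (N ⊓ H).subgroupOf A := by
      rw [← Subgroup.inf_subgroupOf_right N A, h2]
    rw [h1]
    exact Nat.card_congr (Subgroup.subgroupOfEquivOfLe hNH_le_A).toEquiv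
  rw [hAN] at c2 hNsub hq
  rw [c1, hNA, hq, c2, hNsub]
  ring

theorem group_key (σ' : Fin n → G) (N N₁ : Subgroup G) [N.Normal] [N₁.Normal]
    (hle : N ≤ N₁)
    (htop : ∀ H : Subgroup G, (∀ i, σ' i ∈ H ⊔ N₁) → H ⊔ N = ⊤)
    (D : Subgroup G) :
    Nat.card {τ : Fin n → ↥N₁ // Subgroup.closure (Set.range fun i => σ' i * ↑(τ i)) = D}
        * Nat.card ↥N ^ n
      = Nat.card {τ : Fin n → ↥N // Subgroup.closure (Set.range fun i => σ' i * ↑(τ i)) = D}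
        * Nat.card ↥N₁ ^ n := by
  classical
  haveI : Fintype G := Fintype.ofFinite G
  haveI : Finite (Subgroup G) :=
    Finite.of_injective (fun H : Subgroup G => (H : Set G)) SetLike.coe_injective
  haveI : Fintype (Subgroup G) := Fintype.ofFinite _
  set S : Subgroup G → Subgroup G → Finset (Fin n → G) := fun P H =>
    univ.filter fun g => (∀ i, (σ' i)⁻¹ * g i ∈ P) ∧ Subgroup.closure (Set.range g) = H
    with hS
  set B : Subgroup G → Subgroup G → Finset (Fin n → G) := fun P H =>
    univ.filter fun g => ∀ i, (σ' i)⁻¹ * g i ∈ P ∧ g i ∈ H with hB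
  -- card of subtype = card of S
  have hcard : ∀ P H : Subgroup G,
      Nat.card {τ : Fin n → ↥P // Subgroup.closure (Set.range fun i => σ' i * ↑(τ i)) = H}
        = (S P H).card := by
    intro P H
    rw [← Fintype.card_coe, ← Nat.card_eq_fintype_card]
    apply Nat.card_congr
    refine ⟨fun τ => ⟨fun i => σ' i * ↑(τ.1 i), ?_⟩,
      fun g => ⟨fun i => ⟨(σ' i)⁻¹ * g.1 i, ?_⟩, ?_⟩, ?_, ?_⟩
    · simp only [hS, mem_filter, mem_univ, true_and]
      refine ⟨fun i => ?_, τ.2⟩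
      simpa using (τ.1 i).2
    · exact ((mem_filter.mp g.2).2.1 i)
    · have hg := (mem_filter.mp g.2).2.2
      have heq : (fun i => σ' i * ((σ' i)⁻¹ * g.1 i)) = g.1 := by
        funext i; group
      simpa [heq] using hg
    · intro τ; apply Subtype.ext; funext i; apply Subtype.ext; simp
    · intro g; apply Subtype.ext; funext i; simp
  -- partition of B into S-fibers
  have hpart : ∀ (P H : Subgroup G),
      (B P H).card = ∑ H' ∈ univ.filter (· ≤ H), (S P H').card := by
    intro P H
    have hmem : ∀ g ∈ B P H,
        Subgroup.closure (Set.range g) ∈ univ.filter (· ≤ H) := by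
      intro g hg
      simp only [hB, mem_filter, mem_univ, true_and] at hg
      simp only [mem_filter, mem_univ, true_and]
      exact (Subgroup.closure_le H).mpr (by rintro x ⟨i, rfl⟩; exact (hg i).2)
    rw [Finset.card_eq_sum_card_fiberwise hmem]
    refine Finset.sum_congr rfl fun H' hH' => ?_
    simp only [mem_filter, mem_univ, true_and] at hH'
    congr 1
    ext g
    simp only [hS, hB, mem_filter, mem_univ, true_and]
    constructor
    · rintro ⟨hg, hcl⟩
      exact ⟨fun i => (hg i).1, hcl⟩
    · rintro ⟨hg, hcl⟩
      refine ⟨fun i => ⟨hg i, ?_⟩, hcl⟩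
      have : g i ∈ Subgroup.closure (Set.range g) :=
        Subgroup.subset_closure (Set.mem_range_self i)
      exact hH' (hcl ▸ this)
  -- B card as a power
  have hBcard : ∀ (P H : Subgroup G), N ≤ P → H ⊔ N = ⊤ →
      (B P H).card = Nat.card ↥(P ⊓ H) ^ n := by
    intro P H hNP hHtop
    have : B P H = Fintype.piFinset fun i =>
        univ.filter fun x : G => (σ' i)⁻¹ * x ∈ P ∧ x ∈ H := by
      ext g
      simp [hB, Fintype.mem_piFinset]
    rw [this, Fintype.card_piFinset]
    have : ∀ i : Fin n,
        (univ.filter fun x : G => (σ' i)⁻¹ * x ∈ P ∧ x ∈ H).card = Nat.card ↥(P ⊓ H) := by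
      intro i
      exact card_coset_inter (σ' i) P H N hNP (by rw [hHtop]; exact Subgroup.mem_top _)
    rw [Finset.prod_congr rfl fun i _ => this i]
    simp [Finset.prod_const]
  -- empty case
  have hzero : ∀ (P H : Subgroup G), P ≤ N₁ → ¬ (H ⊔ N = ⊤) → S P H = ∅ := by
    intro P H hPN₁ hne
    rw [Finset.eq_empty_iff_forall_notMem]
    intro g hg
    simp only [hS, mem_filter, mem_univ, true_and] at hg
    obtain ⟨hg1, hg2⟩ := hg
    apply hne
    apply htop
    intro i
    have hgi : g i ∈ H := hg2 ▸ Subgroup.subset_closure (Set.mem_range_self i)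
    have : σ' i = g i * ((σ' i)⁻¹ * g i)⁻¹ := by group
    rw [this]
    exact Subgroup.mul_mem _ (Subgroup.mem_sup_left hgi)
      (Subgroup.mem_sup_right (Subgroup.inv_mem _ (hPN₁ (hg1 i))))
  -- main induction
  have main : ∀ (m : ℕ) (H : Subgroup G), Nat.card ↥H ≤ m →
      (S N₁ H).card * Nat.card ↥N ^ n = (S N H).card * Nat.card ↥N₁ ^ n := by
    intro m
    induction m with
    | zero =>
      intro H hm
      exact absurd hm (by simpa using Nat.card_pos (α := ↥H))
    | succ m ih =>
      intro H hm
      by_cases hHtop : H ⊔ N = ⊤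
      · -- B identity
        have hBeq : (B N₁ H).card * Nat.card ↥N ^ n = (B N H).card * Nat.card ↥N₁ ^ n := by
          rw [hBcard N₁ H hle hHtop, hBcard N H le_rfl hHtop, ← mul_pow, ← mul_pow,
            card_inf_mul H N N₁ hle hHtop]
        have hsplit : univ.filter (· ≤ H) = insert H (univ.filter (· < H)) := by
          ext H'
          simp only [mem_filter, mem_univ, true_and, mem_insert]
          rw [le_iff_lt_or_eq]
          tauto
        have hnotmem : H ∉ univ.filter (· < H) := by simp
        have hlt_card : ∀ H' : Subgroup G, H' < H → Nat.card ↥H' ≤ m := by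
          intro H' hH'
          have hlt : Nat.card ↥H' < Nat.card ↥H := by
            rcases lt_or_ge (Nat.card ↥H') (Nat.card ↥H) with h | h
            · exact h
            · exact absurd (Subgroup.eq_of_le_of_card_ge hH'.le h) hH'.ne
          omega
        have e1 : (B N₁ H).card * Nat.card ↥N ^ n
            = (S N₁ H).card * Nat.card ↥N ^ n
              + ∑ H' ∈ univ.filter (· < H), (S N₁ H').card * Nat.card ↥N ^ n := by
          rw [hpart, hsplit, Finset.sum_insert hnotmem, add_mul, Finset.sum_mul]
        have e2 : (B N H).card * Nat.card ↥N₁ ^ n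
            = (S N H).card * Nat.card ↥N₁ ^ n
              + ∑ H' ∈ univ.filter (· < H), (S N H').card * Nat.card ↥N₁ ^ n := by
          rw [hpart, hsplit, Finset.sum_insert hnotmem, add_mul, Finset.sum_mul]
        have esum : ∑ H' ∈ univ.filter (· < H), (S N₁ H').card * Nat.card ↥N ^ n
            = ∑ H' ∈ univ.filter (· < H), (S N H').card * Nat.card ↥N₁ ^ n := by
          refine Finset.sum_congr rfl fun H' hH' => ?_
          simp only [mem_filter, mem_univ, true_and] at hH'
          exact ih H' (hlt_card H' hH')
        have := e1.symm.trans (hBeq.trans e2)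
        rw [esum] at this
        omega
      · rw [hzero N₁ H le_rfl hHtop, hzero N H hle hHtop]
        simp
  rw [hcard N₁ D, hcard N D]
  exact main (Nat.card ↥D) D le_rfl







lemma mem_fixedField_iff' {F' E' : Type*} [Field F'] [Field E'] [Algebra F' E']
    (H : Subgroup (E' ≃ₐ[F'] E')) (y : E') :
    y ∈ IntermediateField.fixedField H ↔ ∀ h ∈ H, h y = y :=
  ⟨fun hy h hh => hy ⟨h, hh⟩, fun hy g => hy g.1 g.2⟩

lemma fixedField_top_eq_bot (F' E' : Type*) [Field F'] [Field E'] [Algebra F' E']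
    [FiniteDimensional F' E'] [IsGalois F' E'] :
    IntermediateField.fixedField (⊤ : Subgroup (E' ≃ₐ[F'] E')) = ⊥ := by
  rw [← (IntermediateField.fixingSubgroup_bot : (⊥ : IntermediateField F' E').fixingSubgroup = ⊤)]
  exact IsGalois.fixedField_fixingSubgroup ⊥

lemma finiteDimensional_of_fixedField_bot {k' E' : Type*} [Field k'] [Field E'] [Algebra k' E']
    (Γ : Subgroup (E' ≃ₐ[k'] E')) [Finite Γ]
    (h : IntermediateField.fixedField Γ = ⊥) : FiniteDimensional k' E' := by
  have h1 : FiniteDimensional ↥(IntermediateField.fixedField Γ) E' :=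
    inferInstanceAs (FiniteDimensional ↥(FixedPoints.subfield Γ E') E')
  rw [h] at h1
  exact FiniteDimensional.trans k' ↥(⊥ : IntermediateField k' E') E'

lemma mem_fixingSubgroup_adjoin_iff {E L : Type*} [Field E] [Field L] [Algebra E L]
    (K : IntermediateField E L) (s : Set L) (g : L ≃ₐ[K] L) :
    g ∈ (IntermediateField.adjoin K s).fixingSubgroup ↔ ∀ x ∈ s, g x = x := by
  rw [IntermediateField.mem_fixingSubgroup_iff]
  constructor
  · intro h x hx
    exact h x (IntermediateField.subset_adjoin K s hx)
  · intro h x hx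
    have hs : s ⊆ ↑(IntermediateField.fixedField
        (Subgroup.closure ({g} : Set (L ≃ₐ[K] L)))) := by
      intro y hy
      show y ∈ IntermediateField.fixedField _
      rw [mem_fixedField_iff']
      intro h' hh'
      induction hh' using Subgroup.closure_induction with
      | mem z hz => rw [Set.mem_singleton_iff] at hz; subst hz; exact h y hy
      | one => rfl
      | mul a b _ _ ha hb => rw [AlgEquiv.mul_apply, hb, ha]
      | inv a _ ha =>
        have h2 : a⁻¹ (a y) = y := a.symm_apply_apply y
        rw [ha] at h2; exact h2
    have hadj : IntermediateField.adjoin K s ≤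
        IntermediateField.fixedField (Subgroup.closure ({g} : Set (L ≃ₐ[K] L))) :=
      IntermediateField.adjoin_le_iff.mpr hs
    exact (mem_fixedField_iff' _ _).mp (hadj hx) g (Subgroup.subset_closure rfl)


section FieldAux

variable (k E L : Type) [Field k] [Field E] [Field L]
  [Algebra k E] [Algebra E L] [Algebra k L] [IsScalarTower k E L]
  (K : IntermediateField E L)

instance auxTower : IsScalarTower k ↥K L :=
  IsScalarTower.of_algebraMap_eq fun _ => rfl

/-- Restriction of `Gal(L/K)` to a normal intermediate extension `F₁/k`. -/
noncomputable def restrHom (F₁ : IntermediateField k L) [Normal k ↥F₁] :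
    (L ≃ₐ[K] L) →* (↥F₁ ≃ₐ[k] ↥F₁) :=
  (AlgEquiv.restrictNormalHom ↥F₁).comp
    (MonoidHom.mk' (fun g : L ≃ₐ[K] L => AlgEquiv.restrictScalars k g) fun _ _ => rfl)

lemma restrHom_apply (F₁ : IntermediateField k L) [Normal k ↥F₁] (g : L ≃ₐ[K] L) (x : ↥F₁) :
    ↑(restrHom k E L K F₁ g x) = g ↑x :=
  AlgEquiv.restrictNormalHom_apply F₁ (AlgEquiv.restrictScalars k g) x

lemma fixingSubgroup_adjoin_eq_ker (F₁ : IntermediateField k L) [Normal k ↥F₁] :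
    (IntermediateField.adjoin K ((F₁ : IntermediateField k L) : Set L)).fixingSubgroup
      = (restrHom k E L K F₁).ker := by
  ext g
  rw [MonoidHom.mem_ker, mem_fixingSubgroup_adjoin_iff]
  constructor
  · intro h
    apply AlgEquiv.ext
    intro x
    apply Subtype.ext
    rw [AlgEquiv.one_apply, restrHom_apply k E L K F₁ g x]
    exact h ↑x x.2
  · intro h x hx
    have h1 : restrHom k E L K F₁ g ⟨x, hx⟩ = ⟨x, hx⟩ := by rw [h]; rfl
    have h2 : ↑(restrHom k E L K F₁ g ⟨x, hx⟩) = g x := restrHom_apply k E L K F₁ g ⟨x, hx⟩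
    rw [h1] at h2
    exact h2.symm

end FieldAux

end St6Aux

open Pointwise in
set_option maxHeartbeats 2000000 in
set_option synthInstance.maxHeartbeats 200000 in
/-- if `k₁ ⊆ L` is a finite Galois extension of `k` such that, for
intermediate fields `F` with `K ⊆ F ⊆ L`, the conditions `F ∩ k_L = k` and `F ∩ k₁ = k`
are equivalent, then `μ¹_{L/K}` computed with respect to `k₁` or to `k_L` gives the same
result. -/
theorem statement6
    (k E L : Type) [Field k] [Field E] [Field L] [PerfectField k]
    [Algebra k E] [Algebra E L] [Algebra k L] [IsScalarTower k E L]
    (hreg : IsRegularExtension k E)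
    [FiniteDimensional E L] [IsGalois E L]
    [IsGalois k (separableClosure k L)]
    (n : ℕ) (hn : 1 ≤ n)
    (ρ : Fin n → (↥(separableClosure k L) ≃ₐ[k] ↥(separableClosure k L)))
    (hgen : Subgroup.closure (Set.range ρ) = ⊤)
    (K : IntermediateField E L)
    (hK : K.restrictScalars k ⊓ separableClosure k L = ⊥)
    (σ' : Fin n → (L ≃ₐ[K] L)) (hσ' : IsLift k E L n K ρ σ')
    (k₁ : IntermediateField k L) [IsGalois k k₁] [FiniteDimensional k k₁]
    (hk₁ : ∀ F : IntermediateField E L, K ≤ F →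
      (F.restrictScalars k ⊓ separableClosure k L = ⊥ ↔ F.restrictScalars k ⊓ k₁ = ⊥))
    (F : IntermediateField E L) (hF : F ∈ SS k E L K) :
    (Nat.card {τ : Fin n → ↥((compKL k E L K).fixingSubgroup) //
        FixT E L n K (fun i => σ' i * ((τ i : L ≃ₐ[K] L))) = F} : ℚ) /
      ((Module.finrank ↥(compKL k E L K) L : ℚ)) ^ n =
    (Nat.card {τ : Fin n → ↥((IntermediateField.adjoin K ((k₁ : IntermediateField k L) :
          Set L)).fixingSubgroup) //
        FixT E L n K (fun i => σ' i * ((τ i : L ≃ₐ[K] L))) = F} : ℚ) /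
      ((Module.finrank ↥(IntermediateField.adjoin K ((k₁ : IntermediateField k L) :
          Set L)) L : ℚ)) ^ n := by
    classical
  obtain ⟨hKF, hFsep⟩ := hF
  haveI : FiniteDimensional ↥K L := FiniteDimensional.right E ↥K L
  haveI : Normal k ↥(separableClosure k L) := inferInstance
  set ψL := St6Aux.restrHom k E L K (separableClosure k L) with hψL
  set ψ1 := St6Aux.restrHom k E L K k₁ with hψ1
  set N : Subgroup (L ≃ₐ[K] L) := (compKL k E L K).fixingSubgroup with hNdef
  set N₁ : Subgroup (L ≃ₐ[K] L) :=
    (IntermediateField.adjoin K ((k₁ : IntermediateField k L) : Set L)).fixingSubgroup with hN₁def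
  have hNker : N = ψL.ker :=
    St6Aux.fixingSubgroup_adjoin_eq_ker k E L K (separableClosure k L)
  have hN₁ker : N₁ = ψ1.ker := St6Aux.fixingSubgroup_adjoin_eq_ker k E L K k₁
  haveI hNn : N.Normal := by rw [hNker]; infer_instance
  haveI hN₁n : N₁.Normal := by rw [hN₁ker]; infer_instance
  have hk₁L : (k₁ : IntermediateField k L) ≤ separableClosure k L := le_separableClosure k L k₁
  have hle : N ≤ N₁ := by
    intro g hg
    have hg' : g ∈ (IntermediateField.adjoin K
        ((separableClosure k L : IntermediateField k L) : Set L)).fixingSubgroup := hg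
    show g ∈ (IntermediateField.adjoin K ((k₁ : IntermediateField k L) : Set L)).fixingSubgroup
    refine (St6Aux.mem_fixingSubgroup_adjoin_iff K
      ((k₁ : IntermediateField k L) : Set L) g).mpr fun x hx => ?_
    exact (St6Aux.mem_fixingSubgroup_adjoin_iff K
      ((separableClosure k L : IntermediateField k L) : Set L) g).mp hg' x (hk₁L hx)
  -- finite dimensionality of k_L over k
  have hfixtop : IntermediateField.fixedField ψL.range = ⊥ := by
    apply le_antisymm ?_ bot_le
    intro x hx
    have hfix : ∀ g : L ≃ₐ[K] L, g ↑x = ↑x := by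
      intro g
      have h1 : ψL g x = x := (St6Aux.mem_fixedField_iff' _ _).mp hx (ψL g) ⟨g, rfl⟩
      have h2 := St6Aux.restrHom_apply k E L K (separableClosure k L) g x
      rw [h1] at h2; exact h2.symm
    have hxK : (↑x : L) ∈ K := by
      have h1 : (↑x : L) ∈ IntermediateField.fixedField (⊤ : Subgroup (L ≃ₐ[K] L)) :=
        (St6Aux.mem_fixedField_iff' _ _).mpr fun h _ => hfix h
      rw [St6Aux.fixedField_top_eq_bot ↥K L, IntermediateField.mem_bot] at h1
      obtain ⟨y, hy⟩ := h1
      rw [← hy]; exact y.2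
    have hxbot : (↑x : L) ∈ (⊥ : IntermediateField k L) := by
      rw [← hK]; exact IntermediateField.mem_inf.mpr ⟨hxK, x.2⟩
    rw [IntermediateField.mem_bot] at hxbot
    obtain ⟨c, hc⟩ := hxbot
    rw [IntermediateField.mem_bot]
    refine ⟨c, Subtype.ext ?_⟩
    rw [← hc]
    exact (IsScalarTower.algebraMap_apply k ↥(separableClosure k L) L c).symm
  haveI : Finite ↥ψL.range :=
    Finite.of_surjective (fun g : L ≃ₐ[K] L => (⟨ψL g, g, rfl⟩ : ψL.range))
      (by rintro ⟨y, g, rfl⟩; exact ⟨g, rfl⟩)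
  haveI : FiniteDimensional k ↥(separableClosure k L) :=
    St6Aux.finiteDimensional_of_fixedField_bot ψL.range hfixtop
  -- the key sup condition
  have htop : ∀ H : Subgroup (L ≃ₐ[K] L), (∀ i, σ' i ∈ H ⊔ N₁) → H ⊔ N = ⊤ := by
    intro H hσH
    have hKF0 : K ≤ (IntermediateField.fixedField H).restrictScalars E := by
      intro x hx
      show x ∈ IntermediateField.fixedField H
      exact (St6Aux.mem_fixedField_iff' _ _).mpr fun h _ => h.commutes ⟨x, hx⟩
    have hcond1 : ((IntermediateField.fixedField H).restrictScalars E).restrictScalars k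
        ⊓ (k₁ : IntermediateField k L) = ⊥ := by
      apply le_antisymm ?_ bot_le
      intro x hx
      rw [IntermediateField.mem_inf] at hx
      obtain ⟨hxF, hxk₁⟩ := hx
      have hfixx : ∀ i, σ' i x = x := by
        intro i
        have hmem : σ' i ∈ (H : Set (L ≃ₐ[K] L)) * (N₁ : Set (L ≃ₐ[K] L)) := by
          rw [← Subgroup.mul_normal H N₁]; exact hσH i
        obtain ⟨h, hh, ν, hν, heq⟩ := hmem
        have hν' : ν ∈ (IntermediateField.adjoin K
            ((k₁ : IntermediateField k L) : Set L)).fixingSubgroup := hν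
        have hνx : ν x = x :=
          (St6Aux.mem_fixingSubgroup_adjoin_iff K
            ((k₁ : IntermediateField k L) : Set L) ν).mp hν' x hxk₁
        have hhx : h x = x := (St6Aux.mem_fixedField_iff' _ _).mp hxF h hh
        rw [← heq]
        show h (ν x) = x
        rw [hνx, hhx]
      have hxkL : x ∈ separableClosure k L := hk₁L hxk₁
      have hρ : ∀ i, ρ i ⟨x, hxkL⟩ = ⟨x, hxkL⟩ := by
        intro i
        apply Subtype.ext
        calc (↑(ρ i ⟨x, hxkL⟩) : L) = σ' i x := (hσ' i ⟨x, hxkL⟩).symm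
          _ = x := hfixx i
      have hxtop : (⟨x, hxkL⟩ : ↥(separableClosure k L)) ∈ IntermediateField.fixedField
          (⊤ : Subgroup (↥(separableClosure k L) ≃ₐ[k] ↥(separableClosure k L))) := by
        rw [← hgen]
        refine (St6Aux.mem_fixedField_iff' _ _).mpr ?_
        intro γ hγ
        induction hγ using Subgroup.closure_induction with
        | mem z hz => obtain ⟨i, rfl⟩ := hz; exact hρ i
        | one => rfl
        | mul a b _ _ ha hb => rw [AlgEquiv.mul_apply, hb, ha]
        | inv a _ ha =>
          have h2 : a⁻¹ (a ⟨x, hxkL⟩) = ⟨x, hxkL⟩ := a.symm_apply_apply _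
          rw [ha] at h2; exact h2
      rw [St6Aux.fixedField_top_eq_bot k ↥(separableClosure k L),
        IntermediateField.mem_bot] at hxtop
      obtain ⟨c, hc⟩ := hxtop
      rw [IntermediateField.mem_bot]
      refine ⟨c, ?_⟩
      rw [IsScalarTower.algebraMap_apply k ↥(separableClosure k L) L c, hc]
      rfl
    have hcond2 := (hk₁ ((IntermediateField.fixedField H).restrictScalars E) hKF0).mpr hcond1
    have hΓH : IntermediateField.fixedField (H.map ψL) = ⊥ := by
      apply le_antisymm ?_ bot_le
      intro x hx
      have hfix : ∀ h ∈ H, h ↑x = ↑x := by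
        intro h hh
        have h1 : ψL h x = x := (St6Aux.mem_fixedField_iff' _ _).mp hx (ψL h) ⟨h, hh, rfl⟩
        have h2 := St6Aux.restrHom_apply k E L K (separableClosure k L) h x
        rw [h1] at h2; exact h2.symm
      have hxF0 : (↑x : L) ∈ IntermediateField.fixedField H :=
        (St6Aux.mem_fixedField_iff' _ _).mpr hfix
      have hxbot : (↑x : L) ∈ (⊥ : IntermediateField k L) := by
        rw [← hcond2]; exact IntermediateField.mem_inf.mpr ⟨hxF0, x.2⟩
      rw [IntermediateField.mem_bot] at hxbot
      obtain ⟨c, hc⟩ := hxbot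
      rw [IntermediateField.mem_bot]
      refine ⟨c, Subtype.ext ?_⟩
      rw [← hc]
      exact (IsScalarTower.algebraMap_apply k ↥(separableClosure k L) L c).symm
    have hmapTop : H.map ψL = ⊤ := by
      rw [← IntermediateField.fixingSubgroup_fixedField (H.map ψL), hΓH,
        IntermediateField.fixingSubgroup_bot]
    rw [Subgroup.eq_top_iff']
    intro g
    have hg : ψL g ∈ H.map ψL := by rw [hmapTop]; exact Subgroup.mem_top _
    obtain ⟨h, hh, heq⟩ := hg
    have hker : h⁻¹ * g ∈ N := by
      rw [hNker, MonoidHom.mem_ker, map_mul, map_inv, heq]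
      group
    have hgeq : g = h * (h⁻¹ * g) := by group
    rw [hgeq]
    exact Subgroup.mul_mem _ (Subgroup.mem_sup_left hh) (Subgroup.mem_sup_right hker)
  -- translate the fixed-field condition to a subgroup condition
  have hcondiff : ∀ g : Fin n → (L ≃ₐ[K] L),
      FixT E L n K g = F ↔ Subgroup.closure (Set.range g)
        = (IntermediateField.extendScalars hKF).fixingSubgroup := by
    intro g
    constructor
    · intro h
      have h' : IntermediateField.fixedField (Subgroup.closure (Set.range g))
          = IntermediateField.extendScalars hKF := by
        apply IntermediateField.restrictScalars_injective E
        rw [IntermediateField.extendScalars_restrictScalars]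
        exact h
      rw [← IntermediateField.fixingSubgroup_fixedField (Subgroup.closure (Set.range g)), h']
    · intro h
      show (IntermediateField.fixedField (Subgroup.closure (Set.range g))).restrictScalars E = F
      rw [h, IsGalois.fixedField_fixingSubgroup (IntermediateField.extendScalars hKF)]
      exact IntermediateField.extendScalars_restrictScalars hKF
  have hNat := St6Aux.group_key σ' N N₁ hle htop (IntermediateField.extendScalars hKF).fixingSubgroup
  have hc1 : Nat.card {τ : Fin n → ↥N //
        FixT E L n K (fun i => σ' i * ((τ i : L ≃ₐ[K] L))) = F}
      = Nat.card {τ : Fin n → ↥N // Subgroup.closure (Set.range fun i => σ' i * ((τ i : L ≃ₐ[K] L)))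
        = (IntermediateField.extendScalars hKF).fixingSubgroup} :=
    Nat.card_congr (Equiv.subtypeEquivRight fun τ => hcondiff _)
  have hc2 : Nat.card {τ : Fin n → ↥N₁ //
        FixT E L n K (fun i => σ' i * ((τ i : L ≃ₐ[K] L))) = F}
      = Nat.card {τ : Fin n → ↥N₁ // Subgroup.closure (Set.range fun i => σ' i * ((τ i : L ≃ₐ[K] L)))
        = (IntermediateField.extendScalars hKF).fixingSubgroup} :=
    Nat.card_congr (Equiv.subtypeEquivRight fun τ => hcondiff _)
  have hrank1 : Module.finrank ↥(compKL k E L K) L = Nat.card ↥N := by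
    exact (IsGalois.card_fixingSubgroup_eq_finrank (compKL k E L K)).symm
  have hrank2 : Module.finrank
      ↥(IntermediateField.adjoin K ((k₁ : IntermediateField k L) : Set L)) L = Nat.card ↥N₁ := by
    exact (IsGalois.card_fixingSubgroup_eq_finrank
      (IntermediateField.adjoin K ((k₁ : IntermediateField k L) : Set L))).symm
  rw [hrank1, hrank2, hc1, hc2]
  have hxpos : (0 : ℚ) < (Nat.card ↥N : ℚ) := by exact_mod_cast Nat.card_pos
  have hypos : (0 : ℚ) < (Nat.card ↥N₁ : ℚ) := by exact_mod_cast Nat.card_pos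
  rw [div_eq_div_iff (by positivity) (by positivity)]
  exact_mod_cast hNat.symm
end

section
/- In the measure setting, let K be an intermediate field with E ⊆ K ⊆ L and K ∩ k_L = k, and suppose F ∈ 𝒮(L/K) is maximal with respect to inclusion in 𝒮(L/K). Then: (i) every tuple ᾱ = (α_1,…,α_n) ∈ Gal(L/F)^n whose restriction to k_L equals ρ̄ generates the group Gal(L/F); and (ii) μ¹_{L/K}({F}) > 0. -/
open IntermediateField

section Helpers

variable (k E L : Type) [Field k] [Field E] [Field L]
  [Algebra k E] [Algebra E L] [Algebra k L] [IsScalarTower k E L]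

noncomputable instance instTower1 (K : IntermediateField E L) : IsScalarTower k ↥K L :=
  IsScalarTower.of_algebraMap_eq' rfl

variable [IsGalois k ↥(separableClosure k L)]

noncomputable def resHom (K : IntermediateField E L) :
    (L ≃ₐ[K] L) →* (↥(separableClosure k L) ≃ₐ[k] ↥(separableClosure k L)) :=
  (AlgEquiv.restrictNormalHom (F := k) (K₁ := L) ↥(separableClosure k L)).comp
    (MonoidHom.mk' (AlgEquiv.restrictScalars k) fun _ _ => rfl)

lemma resHom_commutes (K : IntermediateField E L) (σ : L ≃ₐ[K] L)
    (x : ↥(separableClosure k L)) : σ (x : L) = ((resHom k E L K σ x : L)) :=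
  (AlgEquiv.restrictNormalHom_apply (F := k) (K₁ := L)
    (separableClosure k L) (σ.restrictScalars k) x).symm

variable [FiniteDimensional E L] [IsGalois E L]

lemma fixed_of_resHom_fixed (K : IntermediateField E L)
    (hK : K.restrictScalars k ⊓ separableClosure k L = ⊥)
    (y : ↥(separableClosure k L))
    (hy : ∀ σ : L ≃ₐ[K] L, resHom k E L K σ y = y) :
    ∃ c : k, algebraMap k L c = (y : L) := by
  have h1 : ∀ σ : L ≃ₐ[K] L, σ (y : L) = (y : L) := fun σ => by
    rw [resHom_commutes k E L K σ y, hy σ]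
  have hmem : (y : L) ∈ IntermediateField.fixedField (⊤ : Subgroup (L ≃ₐ[K] L)) := by
    intro g; exact h1 g.1
  rw [← IntermediateField.fixingSubgroup_bot (F := ↥K) (E := L),
    IsGalois.fixedField_fixingSubgroup (⊥ : IntermediateField ↥K L)] at hmem
  rw [IntermediateField.mem_bot] at hmem
  obtain ⟨z, hz⟩ := hmem
  have hyK : (y : L) ∈ K := hz ▸ z.2
  have : (y : L) ∈ K.restrictScalars k ⊓ separableClosure k L := ⟨hyK, y.2⟩
  rw [hK, IntermediateField.mem_bot] at this
  exact this

lemma resHom_surjective (K : IntermediateField E L)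
    (hK : K.restrictScalars k ⊓ separableClosure k L = ⊥)
    (ρ₀ : ↥(separableClosure k L) ≃ₐ[k] ↥(separableClosure k L)) :
    ∃ σ : L ≃ₐ[K] L, resHom k E L K σ = ρ₀ := by
  set kL := ↥(separableClosure k L)
  set H := (resHom k E L K).range with hH
  haveI : Finite (L ≃ₐ[K] L) := Finite.of_fintype _
  haveI : Finite ↥H := by
    have : Finite ↥(Set.range (resHom k E L K)) := Finite.Set.finite_range _
    exact Finite.of_injective (fun x => (⟨x.1, x.2⟩ : Set.range (resHom k E L K)))
      fun a b hab => Subtype.ext (congrArg Subtype.val hab)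
  have hfix : ∀ x ∈ FixedPoints.subfield H kL, ∃ c : k, algebraMap k kL c = x := by
    intro x hx
    have hx' : ∀ σ : L ≃ₐ[K] L, resHom k E L K σ x = x := fun σ =>
      hx ⟨resHom k E L K σ, ⟨σ, rfl⟩⟩
    obtain ⟨c, hc⟩ := fixed_of_resHom_fixed k E L K hK x hx'
    refine ⟨c, Subtype.ext ?_⟩
    rw [← hc, IsScalarTower.algebraMap_apply k kL L]
    rfl
  have hcomm : ∀ x : FixedPoints.subfield H kL,
      ρ₀.toRingEquiv (algebraMap (FixedPoints.subfield H kL) kL x) =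
        algebraMap (FixedPoints.subfield H kL) kL x := by
    rintro ⟨x, hx⟩
    obtain ⟨c, hc⟩ := hfix x hx
    show ρ₀ x = x
    rw [← hc, AlgEquiv.commutes]
  obtain ⟨g, hg⟩ := FixedPoints.toAlgAut_surjective H kL
    (AlgEquiv.ofRingEquiv (f := ρ₀.toRingEquiv) hcomm)
  obtain ⟨σ, hσ⟩ := g.2
  refine ⟨σ, ?_⟩
  ext x
  rw [hσ]
  exact congrArg Subtype.val (AlgEquiv.ext_iff.mp hg x)

variable (n : ℕ) (ρ : Fin n → (↥(separableClosure k L) ≃ₐ[k] ↥(separableClosure k L)))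

lemma fixT_mem_SS (hgen : Subgroup.closure (Set.range ρ) = ⊤)
    (K₁ : IntermediateField E L)
    (hK₁ : K₁.restrictScalars k ⊓ separableClosure k L = ⊥)
    (γ : Fin n → (L ≃ₐ[K₁] L)) (hγ : IsLift k E L n K₁ ρ γ) :
    FixT E L n K₁ γ ∈ SS k E L K₁ := by
  constructor
  · intro x hx
    show x ∈ (IntermediateField.fixedField (Subgroup.closure (Set.range γ))).restrictScalars E
    rw [IntermediateField.mem_restrictScalars]
    intro g
    exact g.1.commutes ⟨x, hx⟩
  · rw [eq_bot_iff]
    intro x hx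
    obtain ⟨hx1, hx2⟩ := hx
    set y : ↥(separableClosure k L) := ⟨x, hx2⟩ with hy
    have hx1' : ∀ g : ↥(Subgroup.closure (Set.range γ)), g.1 x = x := hx1
    have hfix : ∀ i, ρ i y = y := by
      intro i
      apply Subtype.ext
      have h1 : γ i x = x := hx1' ⟨γ i, Subgroup.subset_closure ⟨i, rfl⟩⟩
      have h2 := hγ i y
      rw [← h2]
      exact h1
    have hall : ∀ g : (↥(separableClosure k L) ≃ₐ[k] ↥(separableClosure k L)), g y = y := by
      intro g
      have hg : g ∈ Subgroup.closure (Set.range ρ) := by rw [hgen]; trivial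
      refine Subgroup.closure_induction (p := fun g _ => g y = y)
        ?_ rfl ?_ ?_ hg
      · rintro a ⟨i, rfl⟩; exact hfix i
      · intro a b _ _ ha hb
        show a (b y) = y
        rw [hb, ha]
      · intro a _ ha
        show a.symm y = y
        exact a.symm_apply_eq.mpr ha.symm
    obtain ⟨c, hc⟩ := fixed_of_resHom_fixed k E L K₁ hK₁ y
      (fun σ => hall _)
    rw [IntermediateField.mem_bot]
    exact ⟨c, hc⟩

end Helpers

/-- if `F ∈ 𝒮(L/K)` is maximal with respect to inclusion, then
(i) every tuple `ᾱ ∈ Gal(L/F)ⁿ` restricting to `ρ̄` on `k_L` generates `Gal(L/F)`, and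
(ii) `μ¹_{L/K}({F}) > 0` (for any lift `σ̄'` of `ρ̄` to `Gal(L/K)`). -/
theorem statement7
    (k E L : Type) [Field k] [Field E] [Field L] [PerfectField k]
    [Algebra k E] [Algebra E L] [Algebra k L] [IsScalarTower k E L]
    (hreg : IsRegularExtension k E)
    [FiniteDimensional E L] [IsGalois E L]
    [IsGalois k (separableClosure k L)]
    (n : ℕ) (hn : 1 ≤ n)
    (ρ : Fin n → (↥(separableClosure k L) ≃ₐ[k] ↥(separableClosure k L)))
    (hgen : Subgroup.closure (Set.range ρ) = ⊤)
    (K : IntermediateField E L)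
    (hK : K.restrictScalars k ⊓ separableClosure k L = ⊥)
    (F : IntermediateField E L) (hF : F ∈ SS k E L K)
    (hmax : ∀ F' ∈ SS k E L K, F ≤ F' → F' = F) :
    (∀ α : Fin n → (L ≃ₐ[F] L), IsLift k E L n F ρ α →
        Subgroup.closure (Set.range α) = (⊤ : Subgroup (L ≃ₐ[F] L))) ∧
    (∀ σ' : Fin n → (L ≃ₐ[K] L), IsLift k E L n K ρ σ' →
        0 < mu1Lift k E L n K σ' {F}) := by
  constructor
  · intro α hα
    have hB := fixT_mem_SS k E L n ρ hgen F hF.2 α hα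
    have hSSK : FixT E L n F α ∈ SS k E L K := ⟨hF.1.trans hB.1, hB.2⟩
    have heq : FixT E L n F α = F := hmax _ hSSK hB.1
    have hff : IntermediateField.fixedField (Subgroup.closure (Set.range α)) = ⊥ := by
      ext x
      constructor
      · intro hxf
        have hxF : x ∈ F := by rw [← heq]; exact hxf
        rw [IntermediateField.mem_bot]
        exact ⟨⟨x, hxF⟩, rfl⟩
      · intro hxb
        rw [IntermediateField.mem_bot] at hxb
        obtain ⟨z, rfl⟩ := hxb
        intro g
        exact g.1.commutes z
    have hfg := IntermediateField.fixingSubgroup_fixedField (Subgroup.closure (Set.range α))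
    rw [hff, IntermediateField.fixingSubgroup_bot] at hfg
    exact hfg.symm
  · intro σ' hσ'
    have hKF : K ≤ F := hF.1
    choose β hβ using fun i => resHom_surjective k E L F hF.2 (ρ i)
    let γ : Fin n → (L ≃ₐ[K] L) := fun i => AlgEquiv.ofRingEquiv (f := (β i).toRingEquiv)
      (fun z => (β i).commutes ⟨z.1, hKF z.2⟩)
    have hγlift : IsLift k E L n K ρ γ := by
      intro i x
      show β i (x : L) = _
      rw [resHom_commutes k E L F (β i) x, hβ i]
    have hτmem : ∀ i, (σ' i)⁻¹ * γ i ∈ (compKL k E L K).fixingSubgroup := by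
      intro i
      rw [IntermediateField.mem_fixingSubgroup_iff]
      intro x hx
      have hx' : x ∈ IntermediateField.adjoin K
          ((separableClosure k L : IntermediateField k L) : Set L) := hx
      clear hx
      induction hx' using IntermediateField.adjoin_induction with
      | mem z hz =>
        show (σ' i)⁻¹ (γ i z) = z
        have h1 : γ i z = ((ρ i ⟨z, hz⟩ : ↥(separableClosure k L)) : L) := hγlift i ⟨z, hz⟩
        rw [h1, ← hσ' i ⟨z, hz⟩]
        exact (σ' i).symm_apply_apply z
      | algebraMap z => exact ((σ' i)⁻¹ * γ i).commutes z
      | add a b _ _ ha hb => rw [map_add, ha, hb]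
      | inv a _ ha => rw [map_inv₀, ha]
      | mul a b _ _ ha hb => rw [map_mul, ha, hb]
    let τ : Fin n → ↥((compKL k E L K).fixingSubgroup) := fun i => ⟨(σ' i)⁻¹ * γ i, hτmem i⟩
    have hcomp : (fun i => σ' i * ((τ i : L ≃ₐ[K] L))) = γ :=
      funext fun i => mul_inv_cancel_left _ _
    have hFle : F ≤ FixT E L n K γ := by
      intro x hx
      show x ∈ IntermediateField.fixedField (Subgroup.closure (Set.range γ))
      rintro ⟨g, hg⟩
      show g x = x
      refine Subgroup.closure_induction (p := fun g _ => g x = x) ?_ rfl ?_ ?_ hg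
      · rintro a ⟨i, rfl⟩
        exact (β i).commutes ⟨x, hx⟩
      · intro a b _ _ ha hb
        show a (b x) = x
        rw [hb, ha]
      · intro a _ ha
        show a.symm x = x
        exact a.symm_apply_eq.mpr ha.symm
    have hFfix : FixT E L n K γ = F :=
      hmax _ (fixT_mem_SS k E L n ρ hgen K hK γ hγlift) hFle
    haveI : Finite (L ≃ₐ[K] L) := Finite.of_fintype _
    haveI hne : Nonempty {τ' : Fin n → ↥((compKL k E L K).fixingSubgroup) //
        FixT E L n K (fun i => σ' i * ((τ' i : L ≃ₐ[K] L))) ∈ ({F} : Set (IntermediateField E L))} := by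
      refine ⟨⟨τ, ?_⟩⟩
      rw [show (fun i => σ' i * ((τ i : L ≃ₐ[K] L))) = γ from hcomp, hFfix]
      rfl
    unfold mu1Lift
    apply div_pos
    · exact_mod_cast Nat.card_pos
    · apply pow_pos
      exact_mod_cast Module.finrank_pos
end

section
/- In the measure setting with the iterated measures μ^i, take K = E. Then for every F ∈ 𝒮(L/E), the sequence (μ^i_{L/E}({F}))_{i ≥ 1} converges and its limit μ^∞_{L/E}({F}) is a rational number. -/
open IntermediateField

open Filter Topology Polynomial

noncomputable def shiftOp : Module.End ℚ (ℕ → ℚ) :=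
  { toFun := fun s i => s (i+1), map_add' := by intros; rfl, map_smul' := by intros; rfl }

lemma shiftOp_pow (j : ℕ) (s : ℕ → ℚ) (i : ℕ) : ((shiftOp ^ j) s) i = s (i + j) := by
  induction j generalizing s i with
  | zero => rfl
  | succ j ih =>
    rw [pow_succ]
    show ((shiftOp ^ j) (shiftOp s)) i = _
    rw [ih]; show s (i + j + 1) = _; ring_nf

lemma aeval_shiftOp_apply (p : ℚ[X]) (s : ℕ → ℚ) (i : ℕ) :
    ((Polynomial.aeval shiftOp p) s) i =
      ∑ j ∈ Finset.range (p.natDegree + 1), p.coeff j * s (i + j) := by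
  rw [Polynomial.aeval_eq_sum_range]
  simp only [LinearMap.coe_sum, Finset.sum_apply]
  congr 1; ext j
  simp [shiftOp_pow, smul_eq_mul]

lemma const_of_sub_one_pow (a : ℕ) (v : ℕ → ℚ) (L : ℝ)
    (hv : ((shiftOp - 1 : Module.End ℚ (ℕ → ℚ)) ^ a) v = 0)
    (hlim : Filter.Tendsto (fun i => (v i : ℝ)) atTop (𝓝 L)) :
    ∀ i, v i = v 0 := by
  induction a generalizing v L with
  | zero =>
    simp only [pow_zero, Module.End.one_apply] at hv
    intro i; rw [hv]; rfl
  | succ a ih =>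
    set w : ℕ → ℚ := (shiftOp - 1 : Module.End ℚ (ℕ → ℚ)) v with hw
    have hw' : ((shiftOp - 1 : Module.End ℚ (ℕ → ℚ)) ^ a) w = 0 := by
      rw [hw, ← Module.End.mul_apply, ← pow_succ, hv]
    have hwv : ∀ i, w i = v (i+1) - v i := by
      intro i
      show (shiftOp v - v) i = _
      simp [shiftOp]
    have hwlim : Filter.Tendsto (fun i => (w i : ℝ)) atTop (𝓝 (L - L)) := by
      have h1 : Filter.Tendsto (fun i => (v (i+1) : ℝ)) atTop (𝓝 L) :=
        hlim.comp (tendsto_add_atTop_nat 1)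
      have := h1.sub hlim
      refine this.congr fun i => ?_
      rw [hwv]; push_cast; ring
    have hcw := ih w (L - L) hw' hwlim
    have hw0 : w 0 = 0 := by
      have h3 : Filter.Tendsto (fun _ : ℕ => (w 0 : ℝ)) atTop (𝓝 (L - L)) := by
        refine hwlim.congr fun i => by rw [hcw i]
      have h2 : Filter.Tendsto (fun _ : ℕ => (w 0 : ℝ)) atTop (𝓝 ((w 0 : ℝ))) := tendsto_const_nhds
      have h4 := tendsto_nhds_unique h2 h3
      have : (w 0 : ℝ) = 0 := by rw [h4]; ring
      exact_mod_cast this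
    have hvc : ∀ i, v (i+1) = v i := by
      intro i
      have h5 : w i = 0 := by rw [hcw i, hw0]
      have h6 := hwv i; rw [h5] at h6; linarith
    intro i
    induction i with
    | zero => rfl
    | succ i ih2 => rw [hvc i, ih2]

lemma rational_limit (s : ℕ → ℚ) (χ : ℚ[X]) (hχ : χ.Monic)
    (hrec : (Polynomial.aeval shiftOp χ) s = 0)
    (L : ℝ) (hlim : Filter.Tendsto (fun i => (s i : ℝ)) atTop (𝓝 L)) :
    ∃ c : ℚ, (c : ℝ) = L := by
  classical
  set a := χ.rootMultiplicity 1 with ha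
  set q : ℚ[X] := χ /ₘ (X - C 1) ^ a with hq
  have hfac : (X - C (1:ℚ)) ^ a * q = χ := Polynomial.pow_mul_divByMonic_rootMultiplicity_eq χ 1
  have hq1 : q.eval 1 ≠ 0 := Polynomial.eval_divByMonic_pow_rootMultiplicity_ne_zero 1 hχ.ne_zero
  set v : ℕ → ℚ := (Polynomial.aeval shiftOp q) s with hv
  have hkill : ((shiftOp - 1 : Module.End ℚ (ℕ → ℚ)) ^ a) v = 0 := by
    have h7 : (Polynomial.aeval shiftOp ((X - C (1:ℚ)) ^ a)) v = 0 := by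
      rw [hv, ← Module.End.mul_apply, ← map_mul, hfac, hrec]
    rw [← h7]
    congr 1
    rw [map_pow, map_sub, Polynomial.aeval_X, Polynomial.aeval_C]
    norm_num [Algebra.algebraMap_eq_smul_one]
  have hvlim : Filter.Tendsto (fun i => (v i : ℝ)) atTop (𝓝 (((q.eval 1 : ℚ) : ℝ) * L)) := by
    have heval : ((q.eval 1 : ℚ) : ℝ) = ∑ j ∈ Finset.range (q.natDegree + 1), (q.coeff j : ℝ) := by
      rw [Polynomial.eval_eq_sum_range]; push_cast; simp
    have h8 : Filter.Tendsto
        (fun i => ∑ j ∈ Finset.range (q.natDegree + 1), (q.coeff j : ℝ) * (s (i+j) : ℝ))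
        atTop (𝓝 (∑ j ∈ Finset.range (q.natDegree + 1), (q.coeff j : ℝ) * L)) := by
      refine tendsto_finset_sum _ fun j _ => ?_
      exact (hlim.comp (tendsto_add_atTop_nat j)).const_mul _
    have h2 : (∑ j ∈ Finset.range (q.natDegree + 1), (q.coeff j : ℝ) * L)
        = ((q.eval 1 : ℚ) : ℝ) * L := by
      rw [← Finset.sum_mul, ← heval]
    rw [h2] at h8
    refine h8.congr fun i => ?_
    rw [hv, aeval_shiftOp_apply]; push_cast; rfl
  have hconst := const_of_sub_one_pow a v _ hkill hvlim
  have h9 : Filter.Tendsto (fun _ : ℕ => (v 0 : ℝ)) atTop (𝓝 (((q.eval 1 : ℚ) : ℝ) * L)) :=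
    hvlim.congr fun i => by rw [hconst i]
  have hv0 : (v 0 : ℝ) = ((q.eval 1 : ℚ) : ℝ) * L := tendsto_nhds_unique tendsto_const_nhds h9
  refine ⟨v 0 / q.eval 1, ?_⟩
  push_cast
  rw [hv0]
  field_simp

lemma tendsto_of_linear_rec (a : ℝ) (h0 : 0 ≤ a) (h1 : a < 1) (x b : ℕ → ℝ) (B : ℝ)
    (hx : ∀ i, x (i+1) = a * x i + b i) (hb : Filter.Tendsto b atTop (𝓝 B)) :
    Filter.Tendsto x atTop (𝓝 (B / (1-a))) := by
  have h1a : (0:ℝ) < 1 - a := by linarith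
  set y : ℕ → ℝ := fun i => x i - B / (1-a) with hy
  have hyrec : ∀ i, y (i+1) = a * y i + (b i - B) := by
    intro i
    simp only [hy, hx i]
    field_simp
    ring
  have hy0 : Filter.Tendsto y atTop (𝓝 0) := by
    rw [Metric.tendsto_atTop]
    intro ε hε
    have hb0 : Filter.Tendsto (fun i => b i - B) atTop (𝓝 0) := by
      simpa using hb.sub (tendsto_const_nhds (x := B))
    have hε2 : 0 < ε * (1-a) / 2 := by positivity
    obtain ⟨N₀, hN₀⟩ := (Metric.tendsto_atTop.mp hb0) (ε * (1-a) / 2) hε2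
    have key : ∀ j, |y (N₀ + j)| ≤ a ^ j * |y N₀| + ε / 2 := by
      intro j
      induction j with
      | zero => simp; positivity
      | succ j ih =>
        have hbj : |b (N₀ + j) - B| ≤ ε * (1-a) / 2 := by
          have := hN₀ (N₀ + j) (Nat.le_add_right _ _)
          rw [Real.dist_eq] at this
          simpa using this.le
        have hstep : |y (N₀ + (j+1))| ≤ a * |y (N₀ + j)| + ε * (1-a) / 2 := by
          have heq : y (N₀ + (j+1)) = a * y (N₀ + j) + (b (N₀ + j) - B) := by
            rw [← hyrec]; ring_nf
          rw [heq]
          calc |a * y (N₀ + j) + (b (N₀ + j) - B)| ≤ |a * y (N₀ + j)| + |b (N₀ + j) - B| :=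
                abs_add_le _ _
            _ ≤ a * |y (N₀ + j)| + ε * (1-a) / 2 := by
                rw [abs_mul, abs_of_nonneg h0]; linarith
        calc |y (N₀ + (j+1))| ≤ a * |y (N₀ + j)| + ε * (1-a) / 2 := hstep
          _ ≤ a * (a ^ j * |y N₀| + ε / 2) + ε * (1-a) / 2 := by nlinarith [abs_nonneg (y (N₀+j))]
          _ = a ^ (j+1) * |y N₀| + ε / 2 := by rw [pow_succ]; ring
    have hpow : Filter.Tendsto (fun j => a ^ j * |y N₀|) atTop (𝓝 0) := by
      simpa using (tendsto_pow_atTop_nhds_zero_of_lt_one h0 h1).mul_const |y N₀|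
    obtain ⟨J, hJ⟩ := (Metric.tendsto_atTop.mp hpow) (ε / 4) (by positivity)
    refine ⟨N₀ + J, fun i hi => ?_⟩
    have hiN : N₀ + (i - N₀) = i := by omega
    have hJle : J ≤ i - N₀ := by omega
    have h1' : |y (N₀ + (i - N₀))| ≤ a ^ (i - N₀) * |y N₀| + ε / 2 := key _
    have h2' : a ^ (i - N₀) * |y N₀| < ε / 4 := by
      have := hJ (i - N₀) hJle
      rw [Real.dist_eq] at this
      have hnn : 0 ≤ a ^ (i - N₀) * |y N₀| := by positivity
      rw [abs_of_nonneg (by simpa using hnn)] at this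
      simpa using this
    rw [Real.dist_eq, sub_zero]
    rw [hiN] at h1'
    linarith
  have h10 : Filter.Tendsto (fun i => y i + B / (1-a)) atTop (𝓝 (0 + B / (1-a))) :=
    hy0.add tendsto_const_nhds
  simpa [hy] using h10

lemma rec_satisfies_charpoly {ι : Type} [Fintype ι] [DecidableEq ι] (M : Matrix ι ι ℚ)
    (v : ℕ → ι → ℚ) (hstep : ∀ i, v (i+1) = Matrix.vecMul (v i) M) (G : ι) :
    (Polynomial.aeval shiftOp M.charpoly) (fun j => v j G) = 0 := by
  have hpow : ∀ j i, v (i+j) = Matrix.vecMul (v i) (M ^ j) := by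
    intro j
    induction j with
    | zero => intro i; simp
    | succ j ih =>
      intro i
      have h11 : i + (j+1) = (i+j) + 1 := by ring
      rw [h11, hstep, ih, Matrix.vecMul_vecMul, ← pow_succ]
  funext i
  show ((Polynomial.aeval shiftOp M.charpoly) (fun j => v j G)) i = 0
  rw [aeval_shiftOp_apply]
  have h0 : (Polynomial.aeval M M.charpoly) = 0 := Matrix.aeval_self_charpoly M
  rw [Polynomial.aeval_eq_sum_range] at h0
  have h1 : ∀ j, M.charpoly.coeff j * v (i+j) G
      = ∑ F', v i F' * (M.charpoly.coeff j • (M^j)) F' G := by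
    intro j
    rw [hpow j i]
    simp only [Matrix.vecMul, dotProduct, Matrix.smul_apply, smul_eq_mul, Finset.mul_sum]
    apply Finset.sum_congr rfl; intro F' _; ring
  calc ∑ j ∈ Finset.range (M.charpoly.natDegree + 1), M.charpoly.coeff j * v (i+j) G
      = ∑ j ∈ Finset.range (M.charpoly.natDegree+1),
          ∑ F', v i F' * (M.charpoly.coeff j • (M^j)) F' G :=
        Finset.sum_congr rfl (fun j _ => h1 j)
    _ = ∑ F', v i F' *
          (∑ j ∈ Finset.range (M.charpoly.natDegree+1), M.charpoly.coeff j • (M^j)) F' G := by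
        rw [Finset.sum_comm]
        refine Finset.sum_congr rfl fun F' _ => ?_
        rw [Matrix.sum_apply, Finset.mul_sum]
    _ = 0 := by rw [h0]; simp

section Aux

variable (k E L : Type) [Field k] [Field E] [Field L]
  [Algebra k E] [Algebra E L] [Algebra k L] [IsScalarTower k E L]
  [FiniteDimensional E L] [IsGalois E L]
  (n : ℕ) (ρ : Fin n → (↥(separableClosure k L) ≃ₐ[k] ↥(separableClosure k L)))

/-- membership in FixT from being fixed by all the generators -/
lemma mem_FixT_of_fixed {F' : IntermediateField E L} (α : Fin n → (L ≃ₐ[F'] L)) {x : L}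
    (hx : ∀ i, α i x = x) : x ∈ FixT E L n F' α := by
  rw [FixT, IntermediateField.mem_restrictScalars]
  intro g
  obtain ⟨g, hg⟩ := g
  show g • x = x
  rw [AlgEquiv.smul_def]
  induction hg using Subgroup.closure_induction with
  | mem g hgmem => obtain ⟨i, rfl⟩ := hgmem; exact hx i
  | one => rfl
  | mul g h _ _ hgx hhx => rw [AlgEquiv.mul_apply, hhx, hgx]
  | inv g _ hgx => calc g⁻¹ x = g⁻¹ (g x) := by rw [hgx]
                    _ = x := by
                      show (g⁻¹ * g) x = x
                      rw [inv_mul_cancel]; rfl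

lemma le_FixT {F' : IntermediateField E L} (α : Fin n → (L ≃ₐ[F'] L)) :
    F' ≤ FixT E L n F' α := by
  intro x hx
  refine mem_FixT_of_fixed E L n α fun i => ?_
  exact (α i).commutes ⟨x, hx⟩

lemma mu1_nonneg (F' : IntermediateField E L) (X : Set (IntermediateField E L)) :
    0 ≤ mu1 k E L n ρ F' X := by
  unfold mu1
  positivity

lemma mu1_eq_zero_of_not_le {F' F : IntermediateField E L} (h : ¬ F' ≤ F) :
    mu1 k E L n ρ F' {F} = 0 := by
  unfold mu1
  have : IsEmpty {α : Fin n → (L ≃ₐ[F'] L) //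
      IsLift k E L n F' ρ α ∧ FixT E L n F' α ∈ ({F} : Set (IntermediateField E L))} := by
    refine ⟨fun a => h ?_⟩
    have h2 : FixT E L n F' a.1 = F := a.2.2
    rw [← h2]
    exact le_FixT E L n a.1
  rw [Nat.card_of_isEmpty]
  norm_num

/-- the degree is positive -/
lemma finrank_compKL_pos (F' : IntermediateField E L) :
    0 < Module.finrank ↥(compKL k E L F') L :=
  Module.finrank_pos

/-- number of lifts is at most `[L : F'·k_L]^n` -/
lemma card_lifts_le (F' : IntermediateField E L) :
    Nat.card {α : Fin n → (L ≃ₐ[F'] L) // IsLift k E L n F' ρ α}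
      ≤ (Module.finrank ↥(compKL k E L F') L) ^ n := by
  classical
  set G := (compKL k E L F').fixingSubgroup with hG
  have hcardG : Nat.card G = Module.finrank ↥(compKL k E L F') L := by
    exact IsGalois.card_fixingSubgroup_eq_finrank (compKL k E L F')
  by_cases hne : Nonempty {α : Fin n → (L ≃ₐ[F'] L) // IsLift k E L n F' ρ α}
  · obtain ⟨α₀, h₀⟩ := hne
    have hinj : ∃ f : {α : Fin n → (L ≃ₐ[F'] L) // IsLift k E L n F' ρ α} → (Fin n → G),
        Function.Injective f := by
      refine ⟨fun a i => ⟨(α₀ i)⁻¹ * (a.1 i), ?_⟩, ?_⟩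
      · -- membership in fixing subgroup
        rw [IntermediateField.mem_fixingSubgroup_iff]
        intro x hx
        -- x ∈ adjoin F' S; show it's fixed
        set g : L ≃ₐ[↥F'] L := (α₀ i)⁻¹ * (a.1 i) with hg
        have hS : ∀ y ∈ ((separableClosure k L : IntermediateField k L) : Set L), g y = y := by
          intro y hy
          have h1 : a.1 i y = ((ρ i ⟨y, hy⟩ : ↥(separableClosure k L)) : L) := a.2 i ⟨y, hy⟩
          have h2 : α₀ i y = ((ρ i ⟨y, hy⟩ : ↥(separableClosure k L)) : L) := h₀ i ⟨y, hy⟩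
          rw [hg, AlgEquiv.mul_apply, h1, ← h2]
          exact (α₀ i).symm_apply_apply y
        -- fixed points of g contain the adjoin
        have hT : compKL k E L F' ≤ IntermediateField.fixedField (Subgroup.closure {g}) := by
          rw [compKL, IntermediateField.adjoin_le_iff]
          intro y hy
          intro h
          obtain ⟨h, hh⟩ := h
          show h • y = y
          rw [AlgEquiv.smul_def]
          induction hh using Subgroup.closure_induction with
          | mem h hmem => rw [Set.mem_singleton_iff] at hmem; rw [hmem]; exact hS y hy
          | one => rfl
          | mul g' h' _ _ hgx hhx => rw [AlgEquiv.mul_apply, hhx, hgx]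
          | inv g' _ hgx => calc g'⁻¹ y = g'⁻¹ (g' y) := by rw [hgx]
                              _ = y := by show (g'⁻¹ * g') y = y; rw [inv_mul_cancel]; rfl
        have := hT hx
        exact this ⟨g, Subgroup.subset_closure rfl⟩
      · intro a b hab
        ext i : 2
        have := congrFun hab i
        have h2 : (α₀ i)⁻¹ * (a.1 i) = (α₀ i)⁻¹ * (b.1 i) := congrArg Subtype.val this
        exact mul_left_cancel h2
    obtain ⟨f, hf⟩ := hinj
    calc Nat.card {α : Fin n → (L ≃ₐ[F'] L) // IsLift k E L n F' ρ α}
        ≤ Nat.card (Fin n → G) := Nat.card_le_card_of_injective f hf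
      _ = Nat.card G ^ n := by rw [Nat.card_fun]; simp
      _ = (Module.finrank ↥(compKL k E L F') L) ^ n := by rw [hcardG]
  · have : IsEmpty {α : Fin n → (L ≃ₐ[F'] L) // IsLift k E L n F' ρ α} :=
      not_nonempty_iff.mp hne
    rw [Nat.card_of_isEmpty]
    positivity

end Aux

section Aux2

variable (k E L : Type) [Field k] [Field E] [Field L]
  [Algebra k E] [Algebra E L] [Algebra k L] [IsScalarTower k E L]
  [FiniteDimensional E L] [IsGalois E L]
  (n : ℕ) (ρ : Fin n → (↥(separableClosure k L) ≃ₐ[k] ↥(separableClosure k L)))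

lemma sum_card_fibers [Fintype (IntermediateField E L)] (F' : IntermediateField E L) :
    ∑ F : IntermediateField E L,
      Nat.card {α : Fin n → (L ≃ₐ[F'] L) //
        IsLift k E L n F' ρ α ∧ FixT E L n F' α ∈ ({F} : Set (IntermediateField E L))}
      = Nat.card {α : Fin n → (L ≃ₐ[F'] L) // IsLift k E L n F' ρ α} := by
  classical
  set A := {α : Fin n → (L ≃ₐ[F'] L) // IsLift k E L n F' ρ α} with hA
  have e2 : ∀ F : IntermediateField E L,
      {α : Fin n → (L ≃ₐ[F'] L) //
        IsLift k E L n F' ρ α ∧ FixT E L n F' α ∈ ({F} : Set (IntermediateField E L))}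
        ≃ {a : A // FixT E L n F' a.1 = F} := by
    intro F
    refine Equiv.trans (Equiv.subtypeEquivRight fun α => ?_)
      (Equiv.subtypeSubtypeEquivSubtypeInter (fun α => IsLift k E L n F' ρ α)
        (fun α => FixT E L n F' α = F)).symm
    simp
  calc ∑ F : IntermediateField E L, Nat.card {α : Fin n → (L ≃ₐ[F'] L) //
        IsLift k E L n F' ρ α ∧ FixT E L n F' α ∈ ({F} : Set (IntermediateField E L))}
      = ∑ F : IntermediateField E L, Fintype.card {a : A // FixT E L n F' a.1 = F} := by
        refine Finset.sum_congr rfl fun F _ => ?_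
        rw [Nat.card_congr (e2 F), Nat.card_eq_fintype_card]
    _ = Fintype.card (Σ F : IntermediateField E L, {a : A // FixT E L n F' a.1 = F}) := by
        rw [Fintype.card_sigma]
    _ = Fintype.card A := Fintype.card_congr (Equiv.sigmaFiberEquiv _)
    _ = Nat.card A := (Nat.card_eq_fintype_card).symm

lemma sum_mu1_le_one [Fintype (IntermediateField E L)] (F' : IntermediateField E L) :
    ∑ F : IntermediateField E L, mu1 k E L n ρ F' {F} ≤ 1 := by
  classical
  have hD : (0:ℚ) < ((Module.finrank ↥(compKL k E L F') L : ℚ)) ^ n := by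
    have := finrank_compKL_pos k E L F'
    have h2 : (0:ℚ) < (Module.finrank ↥(compKL k E L F') L : ℚ) := by exact_mod_cast this
    positivity
  unfold mu1
  rw [← Finset.sum_div, div_le_one hD]
  have hcast : ∑ F : IntermediateField E L, ((Nat.card {α : Fin n → (L ≃ₐ[F'] L) //
        IsLift k E L n F' ρ α ∧ FixT E L n F' α ∈ ({F} : Set (IntermediateField E L))} : ℕ) : ℚ)
      = ((∑ F : IntermediateField E L, Nat.card {α : Fin n → (L ≃ₐ[F'] L) //
        IsLift k E L n F' ρ α ∧ FixT E L n F' α ∈ ({F} : Set (IntermediateField E L))} : ℕ) : ℚ) := by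
    push_cast
    rfl
  rw [hcast, sum_card_fibers k E L n ρ F']
  have := card_lifts_le k E L n ρ F'
  calc ((Nat.card {α : Fin n → (L ≃ₐ[F'] L) // IsLift k E L n F' ρ α} : ℕ) : ℚ)
      ≤ (((Module.finrank ↥(compKL k E L F') L) ^ n : ℕ) : ℚ) := by exact_mod_cast this
    _ = ((Module.finrank ↥(compKL k E L F') L : ℚ)) ^ n := by push_cast; rfl

end Aux2


open Filter Topology

/-- with `K = E` (the bottom intermediate field), for every `F ∈ 𝒮(L/E)`
the sequence `(μⁱ_{L/E}({F}))_{i ≥ 1}` converges and its limit `μ^∞_{L/E}({F})` is a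
rational number. -/
theorem statement13
    (k E L : Type) [Field k] [Field E] [Field L] [PerfectField k]
    [Algebra k E] [Algebra E L] [Algebra k L] [IsScalarTower k E L]
    (hreg : IsRegularExtension k E)
    [FiniteDimensional E L] [IsGalois E L]
    [IsGalois k (separableClosure k L)]
    (n : ℕ) (hn : 1 ≤ n)
    (ρ : Fin n → (↥(separableClosure k L) ≃ₐ[k] ↥(separableClosure k L)))
    (hgen : Subgroup.closure (Set.range ρ) = ⊤)
    (F : IntermediateField E L) (hF : F ∈ SS k E L ⊥) :
    ∃ c : ℚ, Tendsto (fun i : ℕ => (muI k E L n ρ ⊥ i F : ℝ)) atTop (𝓝 (c : ℝ)) := by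
  classical
  have hfin : Finite (IntermediateField E L) :=
    Field.finite_intermediateField_of_exists_primitive_element E L
      (Field.exists_primitive_element E L)
  letI : Fintype (IntermediateField E L) := Fintype.ofFinite _
  set P : Matrix (IntermediateField E L) (IntermediateField E L) ℚ :=
    Matrix.of (fun F' G => if F' ∈ SS k E L ⊥ then mu1 k E L n ρ F' {G} else 0) with hPdef
  set m : ℕ → IntermediateField E L → ℚ := muI k E L n ρ ⊥ with hmdef
  have hP0 : ∀ F' G, 0 ≤ P F' G := by
    intro F' G
    rw [hPdef]
    simp only [Matrix.of_apply]
    split_ifs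
    exacts [mu1_nonneg k E L n ρ F' {G}, le_refl 0]
  have hProw : ∀ F', ∑ G, P F' G ≤ 1 := by
    intro F'
    by_cases h : F' ∈ SS k E L ⊥
    · calc ∑ G, P F' G = ∑ G, mu1 k E L n ρ F' {G} := by
            refine Finset.sum_congr rfl fun G _ => ?_
            rw [hPdef]; simp [h]
        _ ≤ 1 := sum_mu1_le_one k E L n ρ F'
    · have : ∀ G, P F' G = 0 := fun G => by rw [hPdef]; simp [h]
      simp [this]
  have hPdiag : ∀ G, P G G ≤ 1 := fun G =>
    le_trans (Finset.single_le_sum (fun G' _ => hP0 G G') (Finset.mem_univ G)) (hProw G)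
  have hPle : ∀ F' G, P F' G ≠ 0 → F' ≤ G := by
    intro F' G h
    by_contra hle
    apply h
    rw [hPdef]
    simp only [Matrix.of_apply]
    split_ifs with h'
    · exact mu1_eq_zero_of_not_le k E L n ρ hle
    · rfl
  have hvm : ∀ (w : IntermediateField E L → ℚ) G,
      Matrix.vecMul w P G = ∑ F', w F' * P F' G := by
    intro w G
    simp [Matrix.vecMul, dotProduct]
  have hstep : ∀ i, m (i+1) = Matrix.vecMul (m i) P := by
    intro i
    funext G
    have hlhs : m (i+1) G = ∑ᶠ F' ∈ SS k E L ⊥, m i F' * mu1 k E L n ρ F' {G} := rfl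
    rw [hlhs, hvm, finsum_mem_def, finsum_eq_sum_of_fintype]
    refine Finset.sum_congr rfl fun F' _ => ?_
    rw [Set.indicator_apply, hPdef]
    simp only [Matrix.of_apply]
    split_ifs with h
    · rfl
    · simp
  have hm0 : ∀ i G, 0 ≤ m i G := by
    intro i
    induction i with
    | zero =>
      intro G
      have : m 0 G = ({⊥} : Set (IntermediateField E L)).indicator 1 G := rfl
      rw [this]
      exact Set.indicator_nonneg (fun _ _ => by norm_num) G
    | succ i ih =>
      intro G
      rw [hstep i, hvm]
      exact Finset.sum_nonneg fun F' _ => mul_nonneg (ih F') (hP0 F' G)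
  have hmass : ∀ i, ∑ G, m i G ≤ 1 := by
    intro i
    induction i with
    | zero =>
      have h1 : ∀ G, m 0 G = if G = ⊥ then 1 else 0 := by
        intro G
        have : m 0 G = ({⊥} : Set (IntermediateField E L)).indicator 1 G := rfl
        rw [this, Set.indicator_apply]
        simp [Set.mem_singleton_iff]
      calc ∑ G, m 0 G = ∑ G, if G = ⊥ then (1:ℚ) else 0 :=
            Finset.sum_congr rfl fun G _ => h1 G
        _ = 1 := by rw [Finset.sum_ite_eq' Finset.univ ⊥ (fun _ => (1:ℚ))]; simp
        _ ≤ 1 := le_refl 1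
    | succ i ih =>
      calc ∑ G, m (i+1) G = ∑ G, ∑ F', m i F' * P F' G := by
            refine Finset.sum_congr rfl fun G _ => ?_
            rw [hstep i, hvm]
        _ = ∑ F', m i F' * ∑ G, P F' G := by
            rw [Finset.sum_comm]
            exact Finset.sum_congr rfl fun F' _ => by rw [Finset.mul_sum]
        _ ≤ ∑ F', m i F' * 1 := by
            refine Finset.sum_le_sum fun F' _ => ?_
            exact mul_le_mul_of_nonneg_left (hProw F') (hm0 i F')
        _ = ∑ F', m i F' := by simp
        _ ≤ 1 := ih
  have hmb : ∀ i G, m i G ≤ 1 := fun i G =>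
    le_trans (Finset.single_le_sum (fun G' _ => hm0 i G') (Finset.mem_univ G)) (hmass i)
  -- convergence by well-founded induction on the poset
  have hconv : ∀ G, ∃ l : ℝ, Tendsto (fun i => ((m i G : ℚ) : ℝ)) atTop (𝓝 l) := by
    intro G
    refine (wellFounded_lt (α := IntermediateField E L)).induction
      (C := fun G => ∃ l : ℝ, Tendsto (fun i => ((m i G : ℚ) : ℝ)) atTop (𝓝 l)) G fun G ih => ?_
    set b : ℕ → ℝ := fun i => ∑ F' ∈ Finset.univ.erase G, ((m i F' : ℚ) : ℝ) * ((P F' G : ℚ) : ℝ)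
      with hbdef
    have hxrec : ∀ i, ((m (i+1) G : ℚ) : ℝ) = ((P G G : ℚ) : ℝ) * ((m i G : ℚ):ℝ) + b i := by
      intro i
      rw [hstep i, hvm]
      rw [← Finset.add_sum_erase _ _ (Finset.mem_univ G)]
      push_cast
      ring
    have hb0 : ∀ i, 0 ≤ b i := by
      intro i
      refine Finset.sum_nonneg fun F' _ => mul_nonneg ?_ ?_
      · exact_mod_cast hm0 i F'
      · exact_mod_cast hP0 F' G
    rcases lt_or_eq_of_le (hPdiag G) with hlt | heq
    · -- P G G < 1
      have hblim : ∃ B : ℝ, Tendsto b atTop (𝓝 B) := by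
        have hterm : ∀ F' : IntermediateField E L, ∃ lf : ℝ, F' ∈ Finset.univ.erase G →
            Tendsto (fun i => ((m i F' : ℚ):ℝ) * ((P F' G : ℚ):ℝ)) atTop (𝓝 lf) := by
          intro F'
          by_cases hz : P F' G = 0
          · refine ⟨0, fun _ => ?_⟩
            have : ∀ i, ((m i F' : ℚ):ℝ) * ((P F' G : ℚ):ℝ) = 0 := by
              intro i; rw [hz]; simp
            simpa [this] using tendsto_const_nhds
          · have hle : F' ≤ G := hPle F' G hz
            by_cases hFG : F' = G
            · exact ⟨0, fun hmem => absurd hFG (Finset.ne_of_mem_erase hmem)⟩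
            · have hlt' : F' < G := lt_of_le_of_ne hle hFG
              obtain ⟨lf, hlf⟩ := ih F' hlt'
              exact ⟨lf * ((P F' G : ℚ):ℝ), fun _ => hlf.mul_const _⟩
        choose lf hlf using hterm
        refine ⟨∑ F' ∈ Finset.univ.erase G, lf F', ?_⟩
        exact tendsto_finset_sum _ fun F' hm' => hlf F' hm'
      obtain ⟨B, hB⟩ := hblim
      refine ⟨B / (1 - ((P G G : ℚ):ℝ)), ?_⟩
      refine tendsto_of_linear_rec ((P G G : ℚ):ℝ) ?_ ?_ _ b B hxrec hB
      · exact_mod_cast hP0 G G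
      · exact_mod_cast hlt
    · -- P G G = 1 : monotone bounded
      refine ⟨_, tendsto_atTop_ciSup ?_ ?_⟩
      · apply monotone_nat_of_le_succ
        intro i
        have h1 := hxrec i
        have h2 := hb0 i
        have h3 : ((P G G : ℚ):ℝ) = 1 := by exact_mod_cast heq
        
        rw [h3, one_mul] at h1
        linarith
      · refine ⟨1, fun x hx => ?_⟩
        obtain ⟨i, rfl⟩ := hx
        show ((m i G : ℚ) : ℝ) ≤ 1
        exact_mod_cast hmb i G
  obtain ⟨l, hl⟩ := hconv F
  have hrecF : (Polynomial.aeval shiftOp P.charpoly) (fun j => m j F) = 0 :=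
    rec_satisfies_charpoly P m hstep F
  obtain ⟨c, hc⟩ := rational_limit (fun i => m i F) P.charpoly P.charpoly_monic hrecF l hl
  exact ⟨c, hc ▸ hl⟩
end
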